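/- Let n ≥ 3 be odd and q ∈ {1, …, n−1}. Then the q-twisted state u_n^{(q)} is a Lyapunov-stable equilibrium of the Kuramoto model on the complete graph K_n with repulsive coupling (α = 1) (Theorem 5.3). -/

import Mathlib

open Finset Real

lemma zmod_sum_val {M : Type*} [AddCommMonoid M] (n : ℕ) [NeZero n] (f : ℕ → M) :
    ∑ x : ZMod n, f x.val = ∑ i ∈ Finset.range n, f i := by
  refine Finset.sum_nbij' (fun x => x.val) (fun i => (i : ZMod n)) ?_ ?_ ?_ ?_ ?_
  · intro a _; exact Finset.mem_range.mpr a.val_lt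
  · intro a _; exact Finset.mem_univ _
  · intro a _; exact ZMod.natCast_rightInverse a
  · intro i hi; exact ZMod.val_cast_of_lt (Finset.mem_range.mp hi)
  · intro a _; rfl

lemma sum_exp_zero (n : ℕ) [NeZero n] (m : ℕ) (hm : ¬ (n ∣ m)) (c : ℝ) :
    ∑ x : ZMod n, Complex.exp ((2 * Real.pi * (m * x.val / n + c) : ℝ) * Complex.I) = 0 := by
  have hn0 : (n : ℝ) ≠ 0 := Nat.cast_ne_zero.mpr (NeZero.ne n)
  have hnC : (n : ℂ) ≠ 0 := Nat.cast_ne_zero.mpr (NeZero.ne n)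
  set ζ : ℂ := Complex.exp ((2 * Real.pi * (m / n) : ℝ) * Complex.I) with hζ
  have hζ1 : ζ ≠ 1 := by
    intro h
    rw [hζ, Complex.exp_eq_one_iff] at h
    obtain ⟨k, hk⟩ := h
    have him := congrArg Complex.im hk
    simp at him
    have hmk : (m : ℝ) = k * n := by
      have h2 : (2 * Real.pi) * ((m : ℝ) / n) = (2 * Real.pi) * (k : ℝ) := by
        ring_nf at him ⊢; linarith
      have h3 := mul_left_cancel₀ (by positivity : (2 * Real.pi : ℝ) ≠ 0) h2
      field_simp at h3; linarith
    have hmk' : (m : ℤ) = k * n := by exact_mod_cast hmk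
    exact hm (Int.natCast_dvd_natCast.mp ⟨k, by linarith⟩)
  have hζn : ζ ^ n = 1 := by
    rw [hζ, ← Complex.exp_nat_mul]
    have : (n : ℂ) * ((2 * Real.pi * (m / n) : ℝ) * Complex.I)
        = (m : ℤ) * (2 * Real.pi * Complex.I) := by
      push_cast; field_simp
    rw [this, Complex.exp_int_mul_two_pi_mul_I]
  have hterm : ∀ x : ZMod n,
      Complex.exp ((2 * Real.pi * (m * x.val / n + c) : ℝ) * Complex.I)
        = Complex.exp ((2 * Real.pi * c : ℝ) * Complex.I) * ζ ^ x.val := by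
    intro x
    rw [hζ, ← Complex.exp_nat_mul, ← Complex.exp_add]
    congr 1
    push_cast
    field_simp
    ring
  simp_rw [hterm]
  rw [← Finset.mul_sum, zmod_sum_val n (fun i => ζ ^ i), geom_sum_eq hζ1, hζn]
  simp

lemma sum_cos_zero (n : ℕ) [NeZero n] (m : ℕ) (hm : ¬ (n ∣ m)) (c : ℝ) :
    ∑ x : ZMod n, Real.cos (2 * Real.pi * ((m : ℝ) * x.val / n + c)) = 0 := by
  have h := sum_exp_zero n m hm c
  calc ∑ x : ZMod n, Real.cos (2 * Real.pi * ((m : ℝ) * x.val / n + c))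
      = (∑ x : ZMod n, Complex.exp ((2 * Real.pi * (m * x.val / n + c) : ℝ) * Complex.I)).re := by
        rw [Complex.re_sum]
        exact Finset.sum_congr rfl fun x _ => (Complex.exp_ofReal_mul_I_re _).symm
    _ = 0 := by rw [h]; rfl

lemma sum_sin_zero (n : ℕ) [NeZero n] (m : ℕ) (hm : ¬ (n ∣ m)) (c : ℝ) :
    ∑ x : ZMod n, Real.sin (2 * Real.pi * ((m : ℝ) * x.val / n + c)) = 0 := by
  have h := sum_exp_zero n m hm c
  calc ∑ x : ZMod n, Real.sin (2 * Real.pi * ((m : ℝ) * x.val / n + c))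
      = (∑ x : ZMod n, Complex.exp ((2 * Real.pi * (m * x.val / n + c) : ℝ) * Complex.I)).im := by
        rw [Complex.im_sum]
        exact Finset.sum_congr rfl fun x _ => (Complex.exp_ofReal_mul_I_im _).symm
    _ = 0 := by rw [h]; rfl

lemma addCircle_norm_coe (x : ℝ) : ‖((x : ℝ) : AddCircle (1:ℝ))‖ = |x - round x| :=
  UnitAddCircle.norm_eq

lemma addCircle_dist_le (a b : ℝ) :
    dist ((a : AddCircle (1:ℝ))) (b : AddCircle (1:ℝ)) ≤ |a - b| := by
  rw [dist_eq_norm]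
  have h : ((a : AddCircle (1:ℝ))) - b = ((a - b : ℝ) : AddCircle (1:ℝ)) :=
    (AddCircle.coe_sub _ _ _).symm
  rw [h, addCircle_norm_coe]
  simpa using round_le (a - b) 0

lemma addCircle_dist_round (a b : ℝ) :
    dist ((a : AddCircle (1:ℝ))) (b : AddCircle (1:ℝ)) = |a - b - round (a - b)| := by
  rw [dist_eq_norm]
  have h : ((a : AddCircle (1:ℝ))) - b = ((a - b : ℝ) : AddCircle (1:ℝ)) :=
    (AddCircle.coe_sub _ _ _).symm
  rw [h, addCircle_norm_coe]

lemma sqrt_exp_eq (y : ℝ) : Real.sqrt (Real.exp y) = Real.exp (y/2) := by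
  rw [show Real.exp y = Real.exp (y/2) ^ 2 by rw [sq, ← Real.exp_add]; ring_nf]
  exact Real.sqrt_sq (Real.exp_pos _).le

lemma abs_cos_sub_cos_le (a b : ℝ) : |Real.cos a - Real.cos b| ≤ |a - b| := by
  rw [Real.cos_sub_cos]
  have h1 : |Real.sin ((a-b)/2)| ≤ |(a-b)/2| := Real.abs_sin_le_abs
  have h2 : |Real.sin ((a+b)/2)| ≤ 1 := Real.abs_sin_le_one _
  have h3 : |(a-b)/2| = |a-b|/2 := by rw [abs_div]; norm_num
  rw [abs_mul, abs_mul]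
  simp only [abs_neg, abs_two]
  rw [h3] at h1
  nlinarith [mul_le_mul h1 h2 (abs_nonneg _) (by positivity), abs_nonneg (a-b)]

lemma abs_sin_sub_sin_le (a b : ℝ) : |Real.sin a - Real.sin b| ≤ |a - b| := by
  rw [Real.sin_sub_sin]
  have h1 : |Real.sin ((a-b)/2)| ≤ |(a-b)/2| := Real.abs_sin_le_abs
  have h2 : |Real.cos ((a+b)/2)| ≤ 1 := Real.abs_cos_le_one _
  have h3 : |(a-b)/2| = |a-b|/2 := by rw [abs_div]; norm_num
  rw [abs_mul, abs_mul]
  simp only [abs_two]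
  rw [h3] at h1
  nlinarith [mul_le_mul h1 h2 (abs_nonneg _) (by positivity), abs_nonneg (a-b)]

lemma key_ineq (nR A B U V : ℝ) (hU : |2*U - nR| ≤ nR/8) (hV : |2*V| ≤ nR/8) :
    3*nR/8 * (A^2+B^2) ≤ B^2*U - 2*A*B*V + A^2*(nR - U) := by
  obtain ⟨hU1, hU2⟩ := abs_le.mp hU
  obtain ⟨hV1, hV2⟩ := abs_le.mp hV
  nlinarith [mul_nonneg (by linarith : (0:ℝ) ≤ nR/8 - (2*U - nR)) (sq_nonneg A),
             mul_nonneg (by linarith : (0:ℝ) ≤ nR/8 + (2*U - nR)) (sq_nonneg B),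
             mul_nonneg (by linarith : (0:ℝ) ≤ nR/8 - 2*V) (sq_nonneg (A+B)),
             mul_nonneg (by linarith : (0:ℝ) ≤ nR/8 + 2*V) (sq_nonneg (A-B))]

/-- A solution of the repulsively coupled (`α = 1`) Kuramoto model on the complete
graph `K_n` with vertex set `Z_n` (lifted to `ℝ^n`):
`du_x/dt = (-1/(n-1)) ∑_{y ≠ x} sin(2π(u_y - u_x))`. -/
def IsRepulsiveKuramotoSolComplete (n : ℕ) [NeZero n] (θ : ℝ → ZMod n → ℝ) : Prop :=
  ∀ (t : ℝ) (x : ZMod n), HasDerivAt (fun s => θ s x)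
    (((-1 : ℝ) / ((n : ℝ) - 1)) *
      ∑ y ∈ Finset.univ.erase x, Real.sin (2 * Real.pi * (θ t y - θ t x))) t

/-- Projection of a lifted configuration to the torus `T^n = (ℝ/ℤ)^n`. -/
noncomputable def torusProjZ (n : ℕ) (θ : ZMod n → ℝ) : ZMod n → AddCircle (1 : ℝ) :=
  fun x => (θ x : AddCircle (1 : ℝ))

set_option maxHeartbeats 2000000 in
/-- Theorem 5.3: for odd `n ≥ 3` and `q ∈ {1,…,n-1}`, the `q`-twisted
state is a Lyapunov-stable equilibrium of the Kuramoto model on the complete graph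
`K_n` with repulsive coupling. -/
theorem twisted_state_stable_complete_graph_repulsive
    (n : ℕ) (hn3 : 3 ≤ n) (hodd : Odd n) [NeZero n]
    (q : ℕ) (hq1 : 1 ≤ q) (hq2 : q ≤ n - 1) (c : ℝ)
    (uq : ZMod n → ℝ)
    (huq : ∀ x : ZMod n, uq x = ((q * x.val : ℕ) : ℝ) / n + c) :
    ∀ ε > (0 : ℝ), ∃ δ > (0 : ℝ), ∀ θ : ℝ → ZMod n → ℝ,
      IsRepulsiveKuramotoSolComplete n θ →
      dist (torusProjZ n (θ 0)) (torusProjZ n uq) < δ →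
      ∀ t ≥ (0 : ℝ), dist (torusProjZ n (θ t)) (torusProjZ n uq) < ε := by
  intro ε hε
  have hπ : (0:ℝ) < π := Real.pi_pos
  have hπ315 : π < 3.15 := Real.pi_lt_d2
  have hπ3 : (3:ℝ) < π := Real.pi_gt_three
  have hn0 : (0:ℝ) < (n:ℝ) := by exact_mod_cast (by omega : 0 < n)
  have hN2 : (2:ℝ) ≤ (n:ℝ) - 1 := by
    have : (3:ℝ) ≤ (n:ℝ) := by exact_mod_cast hn3
    linarith
  have hNpos : (0:ℝ) < (n:ℝ) - 1 := by linarith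
  set δ : ℝ := min ε 1 / (1100 * n) with hδdef
  have hδpos : 0 < δ := by
    apply div_pos (lt_min hε one_pos) (by positivity)
  refine ⟨δ, hδpos, ?_⟩
  intro θ hθsol hinit t ht
  set M : ℝ := 9 * n * δ with hMdef
  have hMpos : 0 < M := by positivity
  have hδn : (n:ℝ) * δ = min ε 1 / 1100 := by
    rw [hδdef]; field_simp
  have hMδ10 : M + δ ≤ min ε 1 / 110 := by
    have hδle : δ ≤ (n:ℝ) * δ := by nlinarith
    have : M + δ ≤ 10 * ((n:ℝ) * δ) := by rw [hMdef]; nlinarith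
    rw [hδn] at this; linarith
  have hMδε : M + δ < ε := by
    have h1 : min ε 1 / 110 ≤ ε / 110 := by
      have := min_le_left ε (1:ℝ); linarith
    have : ε / 110 < ε := by linarith
    linarith [hMδ10]
  have hMδπ : M + δ ≤ 1 / (32 * π) := by
    have h1 : min ε 1 / 110 ≤ 1 / 110 := by
      have := min_le_right ε (1:ℝ); linarith
    have h2 : (1:ℝ) / 110 ≤ 1 / (32 * π) := by
      rw [div_le_div_iff₀ (by norm_num) (by positivity)]
      nlinarith
    linarith [hMδ10]
  -- the order parameter and its energy
  set A : ℝ → ℝ := fun s => ∑ x : ZMod n, Real.cos (2*π*θ s x) with hAdef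
  set Bf : ℝ → ℝ := fun s => ∑ x : ZMod n, Real.sin (2*π*θ s x) with hBdef
  set g : ZMod n → ℝ → ℝ := fun x s =>
    Bf s * Real.cos (2*π*θ s x) - A s * Real.sin (2*π*θ s x) with hgdef
  set E : ℝ → ℝ := fun s => (A s)^2 + (Bf s)^2 with hEdef
  have hEnn : ∀ s, 0 ≤ E s := fun s => by positivity
  -- rewrite the ODE
  have hθ' : ∀ (s : ℝ) (x : ZMod n),
      HasDerivAt (fun u => θ u x) (-(g x s)/((n:ℝ)-1)) s := by
    intro s x
    have h := hθsol s x
    convert h using 1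
    rw [Finset.sum_erase_eq_sub (Finset.mem_univ x)]
    simp only [sub_self, mul_zero, Real.sin_zero, sub_zero]
    have : ∀ y : ZMod n, Real.sin (2*π*(θ s y - θ s x))
        = Real.sin (2*π*θ s y) * Real.cos (2*π*θ s x)
          - Real.cos (2*π*θ s y) * Real.sin (2*π*θ s x) := by
      intro y; rw [mul_sub, Real.sin_sub]
    rw [Finset.sum_congr rfl (fun y _ => this y), Finset.sum_sub_distrib,
      ← Finset.sum_mul, ← Finset.sum_mul]
    rw [hgdef, hAdef, hBdef]
    ring
  have hθcont : ∀ x : ZMod n, Continuous fun s => θ s x := by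
    intro x
    have hd : Differentiable ℝ fun u => θ u x := fun s => (hθ' s x).differentiableAt
    exact hd.continuous
  have hAd : ∀ s, HasDerivAt A
      (∑ x : ZMod n, -Real.sin (2*π*θ s x) * (2*π*(-(g x s)/((n:ℝ)-1)))) s := by
    intro s
    exact HasDerivAt.fun_sum fun x _ => ((hθ' s x).const_mul (2*π)).cos
  have hBd : ∀ s, HasDerivAt Bf
      (∑ x : ZMod n, Real.cos (2*π*θ s x) * (2*π*(-(g x s)/((n:ℝ)-1)))) s := by
    intro s
    exact HasDerivAt.fun_sum fun x _ => ((hθ' s x).const_mul (2*π)).sin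
  have hEd : ∀ s, HasDerivAt E
      (-(4*π/((n:ℝ)-1)) * ∑ x : ZMod n, (g x s)^2) s := by
    intro s
    have h := ((hAd s).pow 2).add ((hBd s).pow 2)
    have hval : ((2:ℕ):ℝ) * A s ^ (2-1) *
          (∑ x : ZMod n, -Real.sin (2*π*θ s x) * (2*π*(-(g x s)/((n:ℝ)-1))))
        + ((2:ℕ):ℝ) * Bf s ^ (2-1) *
          (∑ x : ZMod n, Real.cos (2*π*θ s x) * (2*π*(-(g x s)/((n:ℝ)-1))))
        = -(4*π/((n:ℝ)-1)) * ∑ x : ZMod n, (g x s)^2 := by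
      rw [Finset.mul_sum Finset.univ
            (fun x => -Real.sin (2*π*θ s x) * (2*π*(-(g x s)/((n:ℝ)-1))))
            (((2:ℕ):ℝ) * A s ^ (2-1)),
          Finset.mul_sum Finset.univ
            (fun x => Real.cos (2*π*θ s x) * (2*π*(-(g x s)/((n:ℝ)-1))))
            (((2:ℕ):ℝ) * Bf s ^ (2-1)),
          Finset.mul_sum Finset.univ (fun x => (g x s)^2) (-(4*π/((n:ℝ)-1))),
          ← Finset.sum_add_distrib]
      refine Finset.sum_congr rfl fun x _ => ?_
      simp only [hgdef]
      push_cast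
      ring
    exact h.congr_deriv hval
  have hgE : ∀ s (x : ZMod n), (g x s)^2 ≤ E s := by
    intro s x
    simp only [hgdef, hEdef]
    nlinarith [sq_nonneg (A s * Real.cos (2*π*θ s x) + Bf s * Real.sin (2*π*θ s x)),
      Real.sin_sq_add_cos_sq (2*π*θ s x)]
  -- initial closeness, coordinatewise, with integer shifts
  set m : ZMod n → ℤ := fun x => round (θ 0 x - uq x) with hmdef
  set w : ZMod n → ℝ := fun x => uq x + m x with hwdef
  have hinitw : ∀ x : ZMod n, |θ 0 x - w x| < δ := by
    intro x
    have h1 : dist (torusProjZ n (θ 0) x) (torusProjZ n uq x)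
        ≤ dist (torusProjZ n (θ 0)) (torusProjZ n uq) := dist_le_pi_dist _ _ x
    have h2 := lt_of_le_of_lt h1 hinit
    simp only [torusProjZ] at h2
    rw [addCircle_dist_round] at h2
    simp only [hwdef, hmdef]
    calc |θ 0 x - (uq x + (round (θ 0 x - uq x) : ℝ))|
        = |θ 0 x - uq x - (round (θ 0 x - uq x) : ℝ)| := by ring_nf
      _ < δ := h2
  -- zero sums at the twisted state
  have hndq : ¬ n ∣ q := by
    intro h
    have := Nat.le_of_dvd (by omega) h
    omega
  have hnd2q : ¬ n ∣ 2*q := by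
    intro h
    have hcop : Nat.Coprime 2 n := (Nat.prime_two.coprime_iff_not_dvd).mpr (by
      have := Nat.odd_iff.mp hodd; omega)
    have hcop' : Nat.Coprime n 2 := hcop.symm
    exact hndq (hcop'.dvd_of_dvd_mul_left h)
  have hw1 : ∀ x : ZMod n, 2*π*(w x) = 2*π*((q:ℝ) * x.val / n + c) + ((m x : ℤ) : ℝ) * (2*π) := by
    intro x
    simp only [hwdef]
    rw [huq x]
    push_cast
    ring
  have hw2 : ∀ x : ZMod n, 2*(2*π*(w x))
      = 2*π*(((2*q : ℕ):ℝ) * x.val / n + 2*c) + ((2 * m x : ℤ) : ℝ) * (2*π) := by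
    intro x
    simp only [hwdef]
    rw [huq x]
    push_cast
    ring
  have hsumcosw : ∑ x : ZMod n, Real.cos (2*π*(w x)) = 0 := by
    have : ∀ x : ZMod n, Real.cos (2*π*(w x)) = Real.cos (2*π*((q:ℝ) * x.val / n + c)) := by
      intro x; rw [hw1 x, Real.cos_add_int_mul_two_pi]
    rw [Finset.sum_congr rfl fun x _ => this x]
    exact sum_cos_zero n q hndq c
  have hsumsinw : ∑ x : ZMod n, Real.sin (2*π*(w x)) = 0 := by
    have : ∀ x : ZMod n, Real.sin (2*π*(w x)) = Real.sin (2*π*((q:ℝ) * x.val / n + c)) := by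
      intro x; rw [hw1 x, Real.sin_add_int_mul_two_pi]
    rw [Finset.sum_congr rfl fun x _ => this x]
    exact sum_sin_zero n q hndq c
  have hsumcos2w : ∑ x : ZMod n, Real.cos (2*(2*π*(w x))) = 0 := by
    have : ∀ x : ZMod n, Real.cos (2*(2*π*(w x)))
        = Real.cos (2*π*(((2*q:ℕ):ℝ) * x.val / n + 2*c)) := by
      intro x; rw [hw2 x, Real.cos_add_int_mul_two_pi]
    rw [Finset.sum_congr rfl fun x _ => this x]
    exact sum_cos_zero n (2*q) hnd2q (2*c)
  have hsumsin2w : ∑ x : ZMod n, Real.sin (2*(2*π*(w x))) = 0 := by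
    have : ∀ x : ZMod n, Real.sin (2*(2*π*(w x)))
        = Real.sin (2*π*(((2*q:ℕ):ℝ) * x.val / n + 2*c)) := by
      intro x; rw [hw2 x, Real.sin_add_int_mul_two_pi]
    rw [Finset.sum_congr rfl fun x _ => this x]
    exact sum_sin_zero n (2*q) hnd2q (2*c)
  have hcardn : (Finset.univ : Finset (ZMod n)).card = n := by
    rw [Finset.card_univ, ZMod.card]
  -- initial energy bound
  have habs_sum : ∀ (f h : ZMod n → ℝ) (K : ℝ), (∑ x : ZMod n, h x) = 0 →
      (∀ x, |f x - h x| ≤ K) → |∑ x : ZMod n, f x| ≤ n * K := by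
    intro f h K hzero hb
    have h1 : ∑ x : ZMod n, f x = ∑ x : ZMod n, (f x - h x) := by
      rw [Finset.sum_sub_distrib, hzero, sub_zero]
    rw [h1]
    calc |∑ x : ZMod n, (f x - h x)| ≤ ∑ x : ZMod n, |f x - h x| :=
          Finset.abs_sum_le_sum_abs _ _
      _ ≤ ∑ _x : ZMod n, K := Finset.sum_le_sum fun x _ => hb x
      _ = n * K := by rw [Finset.sum_const, hcardn, nsmul_eq_mul]
  have hA0 : |A 0| ≤ (n:ℝ) * (2*π*δ) := by
    refine habs_sum _ (fun x => Real.cos (2*π*(w x))) _ hsumcosw ?_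
    intro x
    calc |Real.cos (2*π*θ 0 x) - Real.cos (2*π*(w x))| ≤ |2*π*θ 0 x - 2*π*(w x)| :=
          _root_.abs_cos_sub_cos_le _ _
      _ = 2*π*|θ 0 x - w x| := by rw [← mul_sub, abs_mul, abs_of_pos (by positivity : (0:ℝ) < 2*π)]
      _ ≤ 2*π*δ := by nlinarith [(hinitw x).le, abs_nonneg (θ 0 x - w x)]
  have hB0 : |Bf 0| ≤ (n:ℝ) * (2*π*δ) := by
    refine habs_sum _ (fun x => Real.sin (2*π*(w x))) _ hsumsinw ?_
    intro x
    calc |Real.sin (2*π*θ 0 x) - Real.sin (2*π*(w x))| ≤ |2*π*θ 0 x - 2*π*(w x)| :=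
          _root_.abs_sin_sub_sin_le _ _
      _ = 2*π*|θ 0 x - w x| := by rw [← mul_sub, abs_mul, abs_of_pos (by positivity : (0:ℝ) < 2*π)]
      _ ≤ 2*π*δ := by nlinarith [(hinitw x).le, abs_nonneg (θ 0 x - w x)]
  have hE0 : E 0 ≤ M^2 := by
    obtain ⟨hA1, hA2⟩ := abs_le.mp hA0
    obtain ⟨hB1, hB2⟩ := abs_le.mp hB0
    have hsq : 2 * ((n:ℝ) * (2*π*δ))^2 ≤ M^2 := by
      rw [hMdef]
      have hπ2 : π^2 < 9.9225 := by nlinarith [hπ, hπ315]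
      nlinarith [mul_nonneg (show (0:ℝ) ≤ 81 - 8*π^2 by nlinarith [hπ2])
        (sq_nonneg ((n:ℝ)*δ))]
    simp only [hEdef]
    nlinarith [hA1, hA2, hB1, hB2]
  have hSE : Real.sqrt (E 0) ≤ M := by
    rw [show M = Real.sqrt (M^2) from (Real.sqrt_sq hMpos.le).symm]
    exact Real.sqrt_le_sqrt hE0
  -- derivative bound for the energy in the good region
  have hEbound : ∀ s : ℝ, (∀ x : ZMod n, |θ s x - w x| ≤ M + δ) →
      -(4*π/((n:ℝ)-1)) * (∑ x : ZMod n, (g x s)^2) ≤ -(π * E s) := by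
    intro s hreg
    set U := ∑ x : ZMod n, (Real.cos (2*π*θ s x))^2 with hUdef
    set V := ∑ x : ZMod n, Real.sin (2*π*θ s x) * Real.cos (2*π*θ s x) with hVdef
    have hgsum : ∑ x : ZMod n, (g x s)^2
        = (Bf s)^2 * U - 2*(A s)*(Bf s)*V + (A s)^2*((n:ℝ) - U) := by
      have hpt : ∀ x ∈ (Finset.univ : Finset (ZMod n)), (g x s)^2
          = (Real.cos (2*π*θ s x))^2 * ((Bf s)^2 - (A s)^2)
            - Real.sin (2*π*θ s x) * Real.cos (2*π*θ s x) * (2*(A s)*(Bf s))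
            + (A s)^2 := by
        intro x _
        simp only [hgdef]
        linear_combination (A s)^2 * (Real.sin_sq_add_cos_sq (2*π*θ s x))
      rw [Finset.sum_congr rfl hpt, Finset.sum_add_distrib, Finset.sum_sub_distrib,
        ← Finset.sum_mul, ← Finset.sum_mul, Finset.sum_const, hcardn, nsmul_eq_mul,
        ← hUdef, ← hVdef]
      ring
    have hb4 : ∀ x : ZMod n, |θ s x - w x| * (4*π) ≤ (M+δ) * (4*π) := by
      intro x
      exact mul_le_mul_of_nonneg_right (hreg x) (by positivity)
    have hMδ8 : (n:ℝ) * (4*π*(M+δ)) ≤ (n:ℝ)/8 := by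
      have h32 : 4*π*(M+δ) ≤ 4*π*(1/(32*π)) := by
        apply mul_le_mul_of_nonneg_left hMδπ (by positivity)
      have heq : 4*π*(1/(32*π)) = 1/8 := by field_simp; ring
      rw [heq] at h32
      nlinarith [hn0]
    have hP : |2*U - (n:ℝ)| ≤ (n:ℝ)/8 := by
      have h2U : ∑ x : ZMod n, Real.cos (2*(2*π*θ s x)) = 2*U - (n:ℝ) := by
        have hc2 : ∀ x ∈ (Finset.univ : Finset (ZMod n)),
            Real.cos (2*(2*π*θ s x)) = 2*(Real.cos (2*π*θ s x))^2 - 1 :=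
          fun x _ => Real.cos_two_mul _
        rw [Finset.sum_congr rfl hc2, Finset.sum_sub_distrib, ← Finset.mul_sum,
          Finset.sum_const, hcardn, nsmul_eq_mul, mul_one, ← hUdef]
      have hdiff : ∀ x : ZMod n,
          |Real.cos (2*(2*π*θ s x)) - Real.cos (2*(2*π*(w x)))| ≤ 4*π*(M+δ) := by
        intro x
        calc |Real.cos (2*(2*π*θ s x)) - Real.cos (2*(2*π*(w x)))|
            ≤ |2*(2*π*θ s x) - 2*(2*π*(w x))| := _root_.abs_cos_sub_cos_le _ _
          _ = 4*π*|θ s x - w x| := by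
              rw [show 2*(2*π*θ s x) - 2*(2*π*(w x)) = 4*π*(θ s x - w x) by ring,
                abs_mul, abs_of_pos (by positivity : (0:ℝ) < 4*π)]
          _ ≤ 4*π*(M+δ) := by nlinarith [hreg x, abs_nonneg (θ s x - w x)]
      have habs := habs_sum _ _ _ hsumcos2w hdiff
      rw [h2U] at habs
      linarith [habs, hMδ8]
    have hQ : |2*V| ≤ (n:ℝ)/8 := by
      have h2V : ∑ x : ZMod n, Real.sin (2*(2*π*θ s x)) = 2*V := by
        have hs2 : ∀ x ∈ (Finset.univ : Finset (ZMod n)),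
            Real.sin (2*(2*π*θ s x))
              = 2*(Real.sin (2*π*θ s x) * Real.cos (2*π*θ s x)) := by
          intro x _
          rw [Real.sin_two_mul]; ring
        rw [Finset.sum_congr rfl hs2, ← Finset.mul_sum, ← hVdef]
      have hdiff : ∀ x : ZMod n,
          |Real.sin (2*(2*π*θ s x)) - Real.sin (2*(2*π*(w x)))| ≤ 4*π*(M+δ) := by
        intro x
        calc |Real.sin (2*(2*π*θ s x)) - Real.sin (2*(2*π*(w x)))|
            ≤ |2*(2*π*θ s x) - 2*(2*π*(w x))| := _root_.abs_sin_sub_sin_le _ _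
          _ = 4*π*|θ s x - w x| := by
              rw [show 2*(2*π*θ s x) - 2*(2*π*(w x)) = 4*π*(θ s x - w x) by ring,
                abs_mul, abs_of_pos (by positivity : (0:ℝ) < 4*π)]
          _ ≤ 4*π*(M+δ) := by nlinarith [hreg x, abs_nonneg (θ s x - w x)]
      have habs := habs_sum _ _ _ hsumsin2w hdiff
      rw [h2V] at habs
      linarith [habs, hMδ8]
    have hkey : 3*(n:ℝ)/8 * (E s) ≤ ∑ x : ZMod n, (g x s)^2 := by
      rw [hgsum]
      simp only [hEdef]
      exact key_ineq (n:ℝ) (A s) (Bf s) U V hP hQ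
    calc -(4*π/((n:ℝ)-1)) * (∑ x : ZMod n, (g x s)^2)
        ≤ -(4*π/((n:ℝ)-1)) * (3*(n:ℝ)/8 * E s) :=
          mul_le_mul_of_nonpos_left hkey (by
            have : (0:ℝ) < 4*π/((n:ℝ)-1) := by positivity
            linarith)
      _ ≤ -(π * E s) := by
          rw [neg_mul, neg_le_neg_iff]
          rw [div_mul_eq_mul_div, le_div_iff₀ hNpos]
          nlinarith [mul_nonneg (mul_nonneg hπ.le (hEnn s)) (by positivity : (0:ℝ) ≤ (n:ℝ)/2 + 1)]
  -- bootstrap: the drift stays below M for all nonnegative times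
  have Hdrift : ∀ s : ℝ, 0 ≤ s → ∀ x : ZMod n, |θ s x - θ 0 x| < M := by
    by_contra hcon
    push_neg at hcon
    obtain ⟨T, hT0, x0, hx0⟩ := hcon
    set Bad : Set ℝ := {s : ℝ | s ∈ Set.Icc (0:ℝ) T ∧ ∃ x : ZMod n, M ≤ |θ s x - θ 0 x|}
      with hBaddef
    have hBadeq : Bad = Set.Icc (0:ℝ) T ∩ ⋃ x : ZMod n, {s : ℝ | M ≤ |θ s x - θ 0 x|} := by
      ext s
      simp only [hBaddef, Set.mem_setOf_eq, Set.mem_inter_iff, Set.mem_iUnion]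
    have hBadclosed : IsClosed Bad := by
      rw [hBadeq]
      refine isClosed_Icc.inter (isClosed_iUnion_of_finite fun x => ?_)
      exact isClosed_le continuous_const (((hθcont x).sub continuous_const).abs)
    have hBadne : Bad.Nonempty := ⟨T, ⟨hT0, le_refl T⟩, x0, hx0⟩
    have hBadbdd : BddBelow Bad := ⟨0, fun s hs => hs.1.1⟩
    set t₀ := sInf Bad with ht₀def
    have ht₀mem : t₀ ∈ Bad := hBadclosed.csInf_mem hBadne hBadbdd
    have ht₀0 : 0 ≤ t₀ := ht₀mem.1.1
    have hbefore : ∀ s : ℝ, 0 ≤ s → s < t₀ → ∀ x : ZMod n, |θ s x - θ 0 x| < M := by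
      intro s hs0 hst x
      by_contra hge
      push_neg at hge
      have hsBad : s ∈ Bad := ⟨⟨hs0, le_trans hst.le ht₀mem.1.2⟩, x, hge⟩
      exact absurd (csInf_le hBadbdd hsBad) (not_le.mpr hst)
    have hregio : ∀ s : ℝ, 0 ≤ s → s < t₀ → ∀ x : ZMod n, |θ s x - w x| ≤ M + δ := by
      intro s h0 hlt x
      calc |θ s x - w x| ≤ |θ s x - θ 0 x| + |θ 0 x - w x| := abs_sub_le _ _ _
        _ ≤ M + δ := add_le_add (hbefore s h0 hlt x).le (hinitw x).le
    have hEdiff : Differentiable ℝ E := fun s => (hEd s).differentiableAt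
    set F : ℝ → ℝ := fun s => E s * Real.exp (π * s) with hFdef
    have hFd : ∀ s, HasDerivAt F
        ((-(4*π/((n:ℝ)-1)) * ∑ x : ZMod n, (g x s)^2) * Real.exp (π * s)
          + E s * (Real.exp (π * s) * (π * 1))) s := by
      intro s
      exact (hEd s).mul (((hasDerivAt_id s).const_mul π).exp)
    have hFanti : AntitoneOn F (Set.Icc 0 t₀) := by
      apply antitoneOn_of_deriv_nonpos (convex_Icc _ _)
      · exact (hEdiff.continuous.mul
          (Real.continuous_exp.comp (continuous_const.mul continuous_id))).continuousOn
      · intro s _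
        exact ((hFd s).differentiableAt).differentiableWithinAt
      · intro s hs
        rw [interior_Icc] at hs
        rw [(hFd s).deriv]
        have h1 := hEbound s (hregio s hs.1.le hs.2)
        have hexp : (0:ℝ) < Real.exp (π * s) := Real.exp_pos _
        nlinarith [mul_le_mul_of_nonneg_right h1 hexp.le]
    have hEdecay : ∀ s : ℝ, s ∈ Set.Icc 0 t₀ → E s ≤ E 0 * Real.exp (-(π * s)) := by
      intro s hs
      have hF := hFanti (Set.left_mem_Icc.mpr ht₀0) hs hs.1
      have hF0 : F 0 = E 0 := by simp [hFdef]
      rw [hF0] at hF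
      simp only [hFdef] at hF
      have hprod : Real.exp (-(π * s)) * Real.exp (π * s) = 1 := by
        rw [← Real.exp_add]; simp
      calc E s = E s * (Real.exp (-(π * s)) * Real.exp (π * s)) := by rw [hprod, mul_one]
        _ = (E s * Real.exp (π * s)) * Real.exp (-(π * s)) := by ring
        _ ≤ E 0 * Real.exp (-(π * s)) :=
            mul_le_mul_of_nonneg_right hF (Real.exp_pos _).le
    set SE := Real.sqrt (E 0) with hSEdef
    have hSEnn : 0 ≤ SE := Real.sqrt_nonneg _
    set C : ℝ := 2*SE/(π*((n:ℝ)-1)) with hCdef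
    have hCnn : 0 ≤ C := by positivity
    have hgdecay : ∀ s : ℝ, s ∈ Set.Icc 0 t₀ → ∀ x : ZMod n,
        |(-(g x s))/((n:ℝ)-1)| ≤ C * (Real.exp (-(π*s)/2) * (π/2)) := by
      intro s hs x
      have h1 : (g x s)^2 ≤ E 0 * Real.exp (-(π * s)) := (hgE s x).trans (hEdecay s hs)
      have h2 : |g x s| ≤ SE * Real.exp (-(π*s)/2) := by
        rw [show |g x s| = Real.sqrt ((g x s)^2) from (Real.sqrt_sq_eq_abs _).symm]
        calc Real.sqrt ((g x s)^2) ≤ Real.sqrt (E 0 * Real.exp (-(π * s))) :=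
              Real.sqrt_le_sqrt h1
          _ = SE * Real.exp (-(π*s)/2) := by
              rw [Real.sqrt_mul (hEnn 0), sqrt_exp_eq]
      have hCe : C * (Real.exp (-(π*s)/2) * (π/2)) = SE * Real.exp (-(π*s)/2) / ((n:ℝ)-1) := by
        rw [hCdef]; field_simp
      rw [hCe, abs_div, abs_neg, abs_of_pos hNpos]
      exact (div_le_div_iff_of_pos_right hNpos).mpr h2
    have hφd : ∀ s : ℝ, HasDerivAt (fun u => C * (1 - Real.exp (-(π*u)/2)))
        (C * (Real.exp (-(π*s)/2) * (π/2))) s := by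
      intro s
      have h1 : HasDerivAt (fun u : ℝ => -(π*u)/2) (-(π*1)/2) s :=
        ((hasDerivAt_id s).const_mul π).neg.div_const 2
      have h3 := ((hasDerivAt_const s (1:ℝ)).fun_sub h1.exp).const_mul C
      exact h3.congr_deriv (by ring)
    have hdriftx : ∀ x : ZMod n, |θ t₀ x - θ 0 x| ≤ C := by
      intro x
      have hφcont : Continuous (fun u : ℝ => C * (1 - Real.exp (-(π*u)/2))) := by
        have hd : Differentiable ℝ (fun u : ℝ => C * (1 - Real.exp (-(π*u)/2))) :=
          fun s => (hφd s).differentiableAt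
        exact hd.continuous
      have hmono1 : MonotoneOn
          (fun u => C * (1 - Real.exp (-(π*u)/2)) - (θ u x - θ 0 x)) (Set.Icc 0 t₀) := by
        apply monotoneOn_of_deriv_nonneg (convex_Icc _ _)
        · exact (hφcont.sub ((hθcont x).sub continuous_const)).continuousOn
        · intro s _
          exact (((hφd s).sub ((hθ' s x).sub_const (θ 0 x))).differentiableAt).differentiableWithinAt
        · intro s hs
          rw [interior_Icc] at hs
          rw [((hφd s).fun_sub ((hθ' s x).sub_const (θ 0 x))).deriv]
          have hb := hgdecay s ⟨hs.1.le, hs.2.le⟩ x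
          linarith [le_abs_self ((-(g x s))/((n:ℝ)-1)), hb]
      have hmono2 : MonotoneOn
          (fun u => C * (1 - Real.exp (-(π*u)/2)) + (θ u x - θ 0 x)) (Set.Icc 0 t₀) := by
        apply monotoneOn_of_deriv_nonneg (convex_Icc _ _)
        · exact (hφcont.add ((hθcont x).sub continuous_const)).continuousOn
        · intro s _
          exact (((hφd s).add ((hθ' s x).sub_const (θ 0 x))).differentiableAt).differentiableWithinAt
        · intro s hs
          rw [interior_Icc] at hs
          rw [((hφd s).fun_add ((hθ' s x).sub_const (θ 0 x))).deriv]
          have hb := hgdecay s ⟨hs.1.le, hs.2.le⟩ x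
          linarith [neg_abs_le ((-(g x s))/((n:ℝ)-1)), hb]
      have h0mem : (0:ℝ) ∈ Set.Icc (0:ℝ) t₀ := Set.left_mem_Icc.mpr ht₀0
      have htmem : t₀ ∈ Set.Icc (0:ℝ) t₀ := Set.right_mem_Icc.mpr ht₀0
      have e1 := hmono1 h0mem htmem ht₀0
      have e2 := hmono2 h0mem htmem ht₀0
      simp only [mul_zero, neg_zero, zero_div, Real.exp_zero, sub_self, sub_zero, add_zero,
        mul_zero] at e1 e2
      have hexpnn : (0:ℝ) < Real.exp (-(π*t₀)/2) := Real.exp_pos _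
      rw [abs_le]
      constructor
      · nlinarith [e2, hCnn, hexpnn]
      · nlinarith [e1, hCnn, hexpnn]
    have hCM : C < M := by
      rw [hCdef]
      rw [div_lt_iff₀ (by positivity)]
      have h6 : 6 ≤ π*((n:ℝ)-1) := by nlinarith [hπ3, hN2]
      nlinarith [mul_le_mul_of_nonneg_left h6 hMpos.le, hSE, hMpos]
    obtain ⟨x1, hx1⟩ := ht₀mem.2
    exact absurd hx1 (not_le.mpr (lt_of_le_of_lt (hdriftx x1) hCM))
  -- conclusion
  have hcoord : ∀ x : ZMod n, dist (torusProjZ n (θ t) x) (torusProjZ n uq x) ≤ M + δ := by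
    intro x
    have hm0 : (((m x : ℤ) : ℝ) : AddCircle (1:ℝ)) = 0 := by
      rw [AddCircle.coe_eq_zero_iff]
      exact ⟨m x, by simp⟩
    have hwx : ((w x : ℝ) : AddCircle (1:ℝ)) = ((uq x : ℝ) : AddCircle (1:ℝ)) := by
      simp only [hwdef]
      rw [AddCircle.coe_add, hm0, add_zero]
    simp only [torusProjZ]
    calc dist ((θ t x : AddCircle (1:ℝ))) ((uq x : AddCircle (1:ℝ)))
        = dist ((θ t x : AddCircle (1:ℝ))) ((w x : AddCircle (1:ℝ))) := by rw [hwx]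
      _ ≤ |θ t x - w x| := addCircle_dist_le _ _
      _ ≤ |θ t x - θ 0 x| + |θ 0 x - w x| := abs_sub_le _ _ _
      _ ≤ M + δ := add_le_add (Hdrift t ht x).le (hinitw x).le
  have hfin : dist (torusProjZ n (θ t)) (torusProjZ n uq) ≤ M + δ :=
    (dist_pi_le_iff (by positivity)).mpr hcoord
  exact lt_of_le_of_lt hfin hMδε
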